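/- The generating function g_r^{(1)}(u) := sum_{k≥0} u^k P(K_r^{(1)} > k) admits the integral representation g_r^{(1)}(u) = (n+1) ∫_0^1 (1-t)^n ∏_{i=1}^m p_r(x_i, u t/(1-t)) dt. -/

import Mathlib

open Finset MeasureTheory

/-- `p_r(x,s) = ∑_{j=0}^{r-1} binom(x,j) s^j` as a real function. -/
noncomputable def prR (r x : ℕ) (s : ℝ) : ℝ :=
  ∑ j ∈ Finset.range r, (Nat.choose x j : ℝ) * s ^ j

lemma factorial_mul_prod (a b : ℕ) :
    a.factorial * ∏ j ∈ Finset.range (b+1), (a+1+j) = (a+b+1).factorial := by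
  induction b with
  | zero => simp [Nat.factorial_succ, mul_comm]
  | succ b ih =>
    have h1 : a + 1 + (b + 1) = (a + b + 1) + 1 := by omega
    have h2 : a + (b + 1) + 1 = (a + b + 1) + 1 := by omega
    rw [Finset.prod_range_succ, ← mul_assoc, ih, h1, h2, Nat.factorial_succ (a+b+1), mul_comm]

lemma beta_nat (a b : ℕ) :
    ∫ x in (0:ℝ)..1, x ^ a * (1 - x) ^ b
      = (a.factorial : ℝ) * b.factorial / (a + b + 1).factorial := by
  have hu : 0 < Complex.re ((a:ℂ) + 1) := by
    simp only [Complex.add_re, Complex.natCast_re, Complex.one_re]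
    positivity
  have h := Complex.betaIntegral_eval_nat_add_one_right hu b
  rw [Complex.betaIntegral] at h
  simp only [add_sub_cancel_right] at h
  have hint : (∫ (x:ℝ) in (0:ℝ)..1, (x:ℂ) ^ ((a:ℂ)) * ((1:ℂ) - x) ^ ((b:ℂ)))
      = ((∫ x in (0:ℝ)..1, x ^ a * (1 - x) ^ b : ℝ) : ℂ) := by
    rw [← intervalIntegral.integral_ofReal]
    congr 1 with x
    push_cast
    rw [Complex.cpow_natCast, Complex.cpow_natCast]
  rw [hint] at h
  have key : ((a.factorial : ℂ)) * ∏ j ∈ Finset.range (b+1), ((a:ℂ)+1+j)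
      = ((a+b+1).factorial : ℂ) := by
    calc ((a.factorial : ℂ)) * ∏ j ∈ Finset.range (b+1), ((a:ℂ)+1+j)
        = ((a.factorial * ∏ j ∈ Finset.range (b+1), (a+1+j) : ℕ) : ℂ) := by
          push_cast; ring
      _ = _ := by rw [factorial_mul_prod]
  have ha : (a.factorial : ℂ) ≠ 0 := Nat.cast_ne_zero.2 a.factorial_ne_zero
  have hdiv : ((b.factorial : ℂ)) / ∏ j ∈ Finset.range (b+1), ((a:ℂ)+1+j)
      = ((a.factorial : ℂ) * b.factorial) / ((a+b+1).factorial : ℂ) := by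
    rw [← key]
    exact (mul_div_mul_left _ _ ha).symm
  rw [hdiv, show ((a.factorial:ℂ) * b.factorial)/((a+b+1).factorial:ℂ)
      = (((a.factorial * b.factorial / (a+b+1).factorial : ℝ)):ℂ) from by push_cast; ring] at h
  exact Complex.ofReal_inj.mp h

lemma card_perm_image_eq {n : ℕ} (A S : Finset (Fin n)) (h : A.card = S.card) :
    (Finset.univ.filter (fun σ : Equiv.Perm (Fin n) => A.image σ = S)).card
      = A.card.factorial * (n - A.card).factorial := by
  classical
  rw [← Fintype.card_subtype]
  have hiff : ∀ σ : Equiv.Perm (Fin n), A.image σ = S → ∀ a, a ∈ A ↔ σ a ∈ S := by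
    intro σ hσ a
    constructor
    · intro ha; rw [← hσ]; exact Finset.mem_image_of_mem σ ha
    · intro hs
      rw [← hσ, Finset.mem_image] at hs
      obtain ⟨a', ha', he⟩ := hs
      rwa [← σ.injective he]
  let Φ : {σ : Equiv.Perm (Fin n) // A.image ⇑σ = S} →
      ({a // a ∈ A} ≃ {b // b ∈ S}) × ({a // ¬ a ∈ A} ≃ {b // ¬ b ∈ S}) :=
    fun σ => (Equiv.subtypeEquiv σ.1 (hiff σ.1 σ.2),
              Equiv.subtypeEquiv σ.1 (fun a => not_iff_not.mpr (hiff σ.1 σ.2 a)))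
  have hinj : Function.Injective Φ := by
    rintro ⟨σ, hσ⟩ ⟨τ, hτ⟩ hΦ
    simp only [Φ, Prod.mk.injEq] at hΦ
    apply Subtype.ext
    apply Equiv.ext
    intro a
    by_cases ha : a ∈ A
    · have := congrArg (fun e => ((e ⟨a, ha⟩ : {b // b ∈ S}) : Fin n)) hΦ.1
      simpa using this
    · have := congrArg (fun e => ((e ⟨a, ha⟩ : {b // ¬ b ∈ S}) : Fin n)) hΦ.2
      simpa using this
  have hsurj : Function.Surjective Φ := by
    rintro ⟨f, g⟩
    set σ : Equiv.Perm (Fin n) :=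
      (Equiv.sumCompl (· ∈ A)).symm.trans ((Equiv.sumCongr f g).trans
        (Equiv.sumCompl (· ∈ S))) with hσdef
    have hpos : ∀ (a : Fin n) (ha : a ∈ A), σ a = (f ⟨a, ha⟩ : Fin n) := by
      intro a ha
      simp [hσdef, Equiv.sumCompl_symm_apply_of_pos ha]
    have hneg : ∀ (a : Fin n) (ha : ¬ a ∈ A), σ a = (g ⟨a, ha⟩ : Fin n) := by
      intro a ha
      simp [hσdef, Equiv.sumCompl_symm_apply_of_neg ha]
    have himg : A.image ⇑σ = S := by
      ext b
      simp only [Finset.mem_image]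
      constructor
      · rintro ⟨a, ha, rfl⟩
        rw [hpos a ha]
        exact (f ⟨a, ha⟩).2
      · intro hb
        refine ⟨(f.symm ⟨b, hb⟩ : Fin n), (f.symm ⟨b, hb⟩).2, ?_⟩
        rw [hpos _ (f.symm ⟨b, hb⟩).2]
        simp
    refine ⟨⟨σ, himg⟩, ?_⟩
    simp only [Φ, Prod.mk.injEq]
    constructor
    · apply Equiv.ext; rintro ⟨a, ha⟩
      apply Subtype.ext
      simpa using hpos a ha
    · apply Equiv.ext; rintro ⟨a, ha⟩
      apply Subtype.ext
      simpa using hneg a ha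
  rw [Fintype.card_congr (Equiv.ofBijective Φ ⟨hinj, hsurj⟩), Fintype.card_prod]
  have c1 : Fintype.card {a // a ∈ A} = A.card := Fintype.card_coe A
  have c2 : Fintype.card {b // b ∈ S} = A.card := by rw [h]; exact Fintype.card_coe S
  have c3 : Fintype.card {a // ¬ a ∈ A} = n - A.card := by
    rw [Fintype.card_subtype_compl, c1, Fintype.card_fin]
  have c4 : Fintype.card {b // ¬ b ∈ S} = n - A.card := by
    rw [Fintype.card_subtype_compl, c2, Fintype.card_fin]
  rw [Fintype.card_equiv (Fintype.equivOfCardEq (by rw [c1, c2])),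
      Fintype.card_equiv (Fintype.equivOfCardEq (by rw [c3, c4])), c1, c3]

lemma card_filter_val_lt (n k : ℕ) (hk : k ≤ n) :
    ((Finset.univ : Finset (Fin n)).filter (fun t => t.val < k)).card = k := by
  classical
  have : (Finset.univ : Finset (Fin n)).filter (fun t => t.val < k)
      = (Finset.univ : Finset (Fin k)).map (Fin.castLEEmb hk) := by
    ext t
    simp only [Finset.mem_filter, Finset.mem_univ, true_and, Finset.mem_map]
    constructor
    · intro ht
      exact ⟨⟨t.val, ht⟩, Fin.ext rfl⟩
    · rintro ⟨s, -, rfl⟩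
      exact s.isLt
  rw [this, Finset.card_map, Finset.card_univ, Fintype.card_fin]

lemma card_perm_cond {n m : ℕ} (c : Fin n → Fin m) (r k : ℕ) (hk : k ≤ n) :
    Nat.card {σ : Equiv.Perm (Fin n) // ∀ i : Fin m,
        (Finset.univ.filter (fun t : Fin n => t.val < k ∧ c (σ t) = i)).card ≤ r - 1}
      = (((Finset.univ : Finset (Fin n)).powersetCard k).filter
          (fun S => ∀ i, (S.filter (fun b => c b = i)).card ≤ r - 1)).card
        * (k.factorial * (n - k).factorial) := by
  classical
  set A : Finset (Fin n) := Finset.univ.filter (fun t => t.val < k) with hA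
  have hAcard : A.card = k := card_filter_val_lt n k hk
  set V : Finset (Finset (Fin n)) := ((Finset.univ : Finset (Fin n)).powersetCard k).filter
      (fun S => ∀ i, (S.filter (fun b => c b = i)).card ≤ r - 1) with hV
  have hcount : ∀ (σ : Equiv.Perm (Fin n)) (i : Fin m),
      (Finset.univ.filter (fun t : Fin n => t.val < k ∧ c (σ t) = i)).card
        = ((A.image σ).filter (fun b => c b = i)).card := by
    intro σ i
    rw [← Finset.filter_filter, ← hA, Finset.filter_image,
      Finset.card_image_of_injective _ σ.injective]
  rw [Nat.card_eq_fintype_card, Fintype.card_subtype]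
  rw [Finset.card_eq_sum_card_fiberwise
    (f := fun σ : Equiv.Perm (Fin n) => A.image ⇑σ) (t := V) ?_]
  · have heq : ∀ S ∈ V,
        ((Finset.univ.filter (fun σ : Equiv.Perm (Fin n) => ∀ i,
          (Finset.univ.filter (fun t : Fin n => t.val < k ∧ c (σ t) = i)).card ≤ r - 1)).filter
            (fun σ : Equiv.Perm (Fin n) => A.image ⇑σ = S)).card = k.factorial * (n - k).factorial := by
      intro S hS
      rw [hV, Finset.mem_filter, Finset.mem_powersetCard] at hS
      have hfe : ((Finset.univ.filter (fun σ : Equiv.Perm (Fin n) => ∀ i,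
          (Finset.univ.filter (fun t : Fin n => t.val < k ∧ c (σ t) = i)).card ≤ r - 1)).filter
            (fun σ : Equiv.Perm (Fin n) => A.image ⇑σ = S))
          = Finset.univ.filter (fun σ : Equiv.Perm (Fin n) => A.image σ = S) := by
        rw [Finset.filter_filter]
        apply Finset.filter_congr
        intro σ _
        constructor
        · exact fun h => h.2
        · intro h
          refine ⟨fun i => ?_, h⟩
          rw [hcount σ i, h]
          exact hS.2 i
      rw [hfe, card_perm_image_eq A S (by rw [hAcard, hS.1.2]), hAcard]
    rw [Finset.sum_congr rfl heq, Finset.sum_const, smul_eq_mul]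
  · intro σ hσ
    rw [Finset.mem_coe, Finset.mem_filter] at hσ
    rw [hV, Finset.mem_coe, Finset.mem_filter, Finset.mem_powersetCard]
    refine ⟨⟨Finset.subset_univ _, ?_⟩, fun i => ?_⟩
    · rw [Finset.card_image_of_injective _ σ.injective, hAcard]
    · rw [← hcount σ i]
      exact hσ.2 i

lemma biUnion_filter_eq {n m : ℕ} (c : Fin n → Fin m) (f : Fin m → Finset (Fin n))
    (hf : ∀ i, f i ⊆ Finset.univ.filter (fun b => c b = i)) (i : Fin m) :
    (Finset.univ.biUnion f).filter (fun b => c b = i) = f i := by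
  classical
  ext b
  simp only [Finset.mem_filter, Finset.mem_biUnion, Finset.mem_univ, true_and]
  constructor
  · rintro ⟨⟨i', hb⟩, hc⟩
    have hci' : c b = i' := (Finset.mem_filter.1 (hf i' hb)).2
    obtain rfl : i' = i := hci'.symm.trans hc
    exact hb
  · intro hb
    exact ⟨⟨i, hb⟩, (Finset.mem_filter.1 (hf i hb)).2⟩

lemma card_sets_count {n m : ℕ} (c : Fin n → Fin m) (x : Fin m → ℕ)
    (hx : ∀ i, (Finset.univ.filter (fun b : Fin n => c b = i)).card = x i)
    (p : Fin m → ℕ) :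
    ((Finset.univ : Finset (Finset (Fin n))).filter
      (fun S => ∀ i, (S.filter (fun b => c b = i)).card = p i)).card
      = ∏ i, (x i).choose (p i) := by
  classical
  rw [← Fintype.card_subtype]
  have e : {S : Finset (Fin n) // ∀ i, (S.filter (fun b => c b = i)).card = p i}
      ≃ (∀ i : Fin m, {T // T ∈ (Finset.univ.filter (fun b : Fin n => c b = i)).powersetCard (p i)}) := {
    toFun := fun S i => ⟨S.1.filter (fun b => c b = i), by
      rw [Finset.mem_powersetCard]
      exact ⟨Finset.filter_subset_filter _ (Finset.subset_univ _), S.2 i⟩⟩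
    invFun := fun f => ⟨Finset.univ.biUnion (fun i => (f i).1), by
      intro i
      have hsub : ∀ i', ((f i').1 : Finset (Fin n)) ⊆ Finset.univ.filter (fun b => c b = i') :=
        fun i' => (Finset.mem_powersetCard.1 (f i').2).1
      rw [biUnion_filter_eq c _ hsub i]
      exact (Finset.mem_powersetCard.1 (f i).2).2⟩
    left_inv := by
      rintro ⟨S, hS⟩
      apply Subtype.ext
      simp only
      ext b
      simp only [Finset.mem_biUnion, Finset.mem_univ, true_and, Finset.mem_filter]
      constructor
      · rintro ⟨i, hb, -⟩; exact hb
      · intro hb; exact ⟨c b, hb, rfl⟩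
    right_inv := by
      intro f
      funext i
      apply Subtype.ext
      simp only
      have hsub : ∀ i', ((f i').1 : Finset (Fin n)) ⊆ Finset.univ.filter (fun b => c b = i') :=
        fun i' => (Finset.mem_powersetCard.1 (f i').2).1
      exact biUnion_filter_eq c _ hsub i }
  rw [Fintype.card_congr e, Fintype.card_pi]
  congr 1
  funext i
  rw [Fintype.card_coe, Finset.card_powersetCard, hx i]

lemma card_sets_eq_sum {n m r k : ℕ} (hr : 1 ≤ r) (c : Fin n → Fin m) (x : Fin m → ℕ)
    (hx : ∀ i, (Finset.univ.filter (fun b : Fin n => c b = i)).card = x i) :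
    ((((Finset.univ : Finset (Fin n)).powersetCard k).filter
        (fun S => ∀ i, (S.filter (fun b => c b = i)).card ≤ r - 1)).card)
      = ∑ p ∈ (Fintype.piFinset fun _ : Fin m => Finset.range r).filter
          (fun p => ∑ i, p i = k), ∏ i, (x i).choose (p i) := by
  classical
  have hpart : ∀ S : Finset (Fin n), S.card = ∑ i, (S.filter (fun b => c b = i)).card :=
    fun S => Finset.card_eq_sum_card_fiberwise (fun b _ => Finset.mem_univ (c b))
  rw [Finset.card_eq_sum_card_fiberwise
      (f := fun S : Finset (Fin n) => fun i => (S.filter (fun b => c b = i)).card)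
      (t := (Fintype.piFinset fun _ : Fin m => Finset.range r).filter
          (fun p => ∑ i, p i = k)) ?_]
  · apply Finset.sum_congr rfl
    intro p hp
    rw [Finset.mem_filter, Fintype.mem_piFinset] at hp
    have hfe : ((((Finset.univ : Finset (Fin n)).powersetCard k).filter
        (fun S => ∀ i, (S.filter (fun b => c b = i)).card ≤ r - 1)).filter
          (fun S => (fun i => (S.filter (fun b => c b = i)).card) = p))
        = (Finset.univ : Finset (Finset (Fin n))).filter
            (fun S => ∀ i, (S.filter (fun b => c b = i)).card = p i) := by
      ext S
      simp only [Finset.mem_filter, Finset.mem_powersetCard, Finset.mem_univ, true_and,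
        funext_iff]
      constructor
      · rintro ⟨-, hfun⟩
        exact hfun
      · intro hfun
        refine ⟨⟨⟨Finset.subset_univ _, ?_⟩, fun i => ?_⟩, hfun⟩
        · rw [hpart S, ← hp.2]
          exact Finset.sum_congr rfl (fun i _ => hfun i)
        · rw [hfun i]
          have := hp.1 i
          rw [Finset.mem_range] at this
          omega
    rw [hfe, card_sets_count c x hx p]
  · intro S hS
    rw [Finset.mem_coe, Finset.mem_filter, Finset.mem_powersetCard] at hS
    rw [Finset.mem_coe, Finset.mem_filter, Fintype.mem_piFinset]
    refine ⟨fun i => ?_, ?_⟩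
    · rw [Finset.mem_range]
      show (S.filter (fun b => c b = i)).card < r
      have := hS.2 i
      omega
    · rw [← hpart S, hS.1.2]




/-- Integral representation of the generating function of `P(K_r^{(1)} > k)`:
`∑_k u^k P(K_r^{(1)} > k) = (n+1) ∫_0^1 (1-t)^n ∏_i p_r(x_i, ut/(1-t)) dt`. -/
theorem gen_fun_collision_without_replacement_integral
    (n m r : ℕ) (x : Fin m → ℕ) (c : Fin n → Fin m)
    (hx : ∀ i, (Finset.univ.filter (fun b : Fin n => c b = i)).card = x i)
    (hn : ∑ i, x i = n) (hr : 2 ≤ r) (hex : ∃ i, r ≤ x i) (u : ℝ) :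
    (∑' k : ℕ, u ^ k *
        ((Nat.card {σ : Equiv.Perm (Fin n) // ∀ i : Fin m,
            (Finset.univ.filter (fun t : Fin n => t.val < k ∧ c (σ t) = i)).card ≤ r - 1} : ℝ)
          / (Nat.factorial n : ℝ)))
    = (n + 1) * ∫ t in (0:ℝ)..1, (1 - t) ^ n * ∏ i, prR r (x i) (u * t / (1 - t)) := by
  classical
  obtain ⟨i0, hi0⟩ := hex
  have hn2 : 2 ≤ n := by
    have : x i0 ≤ ∑ i, x i := Finset.single_le_sum (fun i _ => Nat.zero_le _) (Finset.mem_univ i0)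
    omega
  set P : Finset (Fin m → ℕ) := Fintype.piFinset fun _ : Fin m => Finset.range r with hP
  set P₁ : Finset (Fin m → ℕ) := P.filter (fun p => ∑ i, p i < n) with hP₁
  -- vanishing of the tail
  have hzero : ∀ k, n ≤ k → Nat.card {σ : Equiv.Perm (Fin n) // ∀ i : Fin m,
      (Finset.univ.filter (fun t : Fin n => t.val < k ∧ c (σ t) = i)).card ≤ r - 1} = 0 := by
    intro k hk
    have : IsEmpty {σ : Equiv.Perm (Fin n) // ∀ i : Fin m,
        (Finset.univ.filter (fun t : Fin n => t.val < k ∧ c (σ t) = i)).card ≤ r - 1} := by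
      constructor
      rintro ⟨σ, hσ⟩
      have h1 : (Finset.univ.filter (fun t : Fin n => t.val < k ∧ c (σ t) = i0))
          = Finset.univ.filter (fun t : Fin n => c (σ t) = i0) := by
        apply Finset.filter_congr
        intro t _
        have : t.val < k := lt_of_lt_of_le t.isLt hk
        simp [this]
      have hc2 : (Finset.univ.filter (fun t : Fin n => c (σ t) = i0)).card = x i0 := by
        have himg : Finset.image (⇑σ) (Finset.univ.filter (fun t : Fin n => c (σ t) = i0))
            = Finset.univ.filter (fun b : Fin n => c b = i0) := by
          ext b
          simp only [Finset.mem_image, Finset.mem_filter, Finset.mem_univ, true_and]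
          constructor
          · rintro ⟨t, ht, rfl⟩; exact ht
          · intro hb; exact ⟨σ.symm b, by simpa using hb, by simp⟩
        rw [← hx i0, ← himg, Finset.card_image_of_injective _ σ.injective]
      have := hσ i0
      rw [h1, hc2] at this
      omega
    exact Nat.card_of_isEmpty
  -- if the product of binomials is nonzero then the index sum is < n
  have hKle : ∀ p ∈ P, (∏ i, ((x i).choose (p i) : ℝ)) ≠ 0 → ∑ i, p i < n := by
    intro p hp hne
    have hle : ∀ i, p i ≤ x i := by
      intro i
      by_contra hgt
      apply hne
      apply Finset.prod_eq_zero (Finset.mem_univ i)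
      rw [Nat.choose_eq_zero_of_lt (by omega)]
      exact Nat.cast_zero
    have hlt : p i0 < x i0 := by
      have hpi : p i0 < r := by
        have := (Fintype.mem_piFinset.1 hp) i0
        rwa [Finset.mem_range] at this
      omega
    have := Finset.sum_lt_sum (fun i (_ : i ∈ Finset.univ) => hle i)
      ⟨i0, Finset.mem_univ i0, hlt⟩
    rwa [hn] at this
  -- pointwise expansion of the integrand
  have hptw : ∀ t : ℝ, (1 : ℝ) - t ≠ 0 →
      (1 - t) ^ n * ∏ i, prR r (x i) (u * t / (1 - t))
        = ∑ p ∈ P, (∏ i, ((x i).choose (p i) : ℝ)) * u ^ (∑ i, p i) *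
            (t ^ (∑ i, p i) * (1 - t) ^ (n - ∑ i, p i)) := by
    intro t ht
    simp only [prR]
    rw [Finset.prod_univ_sum, Finset.mul_sum]
    apply Finset.sum_congr rfl
    intro p hp
    rw [Finset.prod_mul_distrib, Finset.prod_pow_eq_pow_sum]
    by_cases hc : (∏ i, ((x i).choose (p i) : ℝ)) = 0
    · rw [hc]; ring
    · have hK : ∑ i, p i ≤ n := le_of_lt (hKle p hp hc)
      have hsplit : (1 - t) ^ n = (1 - t) ^ (n - ∑ i, p i) * (1 - t) ^ (∑ i, p i) := by
        rw [← pow_add, Nat.sub_add_cancel hK]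
      rw [hsplit, div_pow, mul_pow]
      field_simp
  -- a.e. rewriting of the integral
  have h1ae : ∀ᵐ t : ℝ, t ≠ (1:ℝ) := by
    rw [MeasureTheory.ae_iff]
    have hset : {a : ℝ | ¬ a ≠ 1} = {1} := by ext a; simp
    rw [hset]
    exact Real.volume_singleton
  have hcongr : (∫ t in (0:ℝ)..1, (1 - t) ^ n * ∏ i, prR r (x i) (u * t / (1 - t)))
      = ∫ t in (0:ℝ)..1, ∑ p ∈ P, (∏ i, ((x i).choose (p i) : ℝ)) * u ^ (∑ i, p i) *
          (t ^ (∑ i, p i) * (1 - t) ^ (n - ∑ i, p i)) := by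
    apply intervalIntegral.integral_congr_ae
    filter_upwards [h1ae] with t ht _
    exact hptw t (fun h => ht (by linarith))
  have hswap : (∫ t in (0:ℝ)..1, ∑ p ∈ P, (∏ i, ((x i).choose (p i) : ℝ)) * u ^ (∑ i, p i) *
          (t ^ (∑ i, p i) * (1 - t) ^ (n - ∑ i, p i)))
      = ∑ p ∈ P, (∏ i, ((x i).choose (p i) : ℝ)) * u ^ (∑ i, p i) *
          (((∑ i, p i).factorial : ℝ) * ((n - ∑ i, p i).factorial : ℝ)
            / (((∑ i, p i) + (n - ∑ i, p i) + 1).factorial : ℝ)) := by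
    rw [intervalIntegral.integral_finset_sum (fun p _ =>
      (Continuous.intervalIntegrable (by
        exact (continuous_const.mul ((continuous_pow _).mul
          ((continuous_const.sub continuous_id).pow _))) ) _ _))]
    apply Finset.sum_congr rfl
    intro p _
    rw [intervalIntegral.integral_const_mul, beta_nat]
  -- the common value
  have hTk : ∀ k, k < n → P₁.filter (fun p => ∑ i, p i = k)
      = P.filter (fun p => ∑ i, p i = k) := by
    intro k hk
    rw [hP₁, Finset.filter_filter]
    apply Finset.filter_congr
    intro p _
    constructor
    · exact fun h => h.2
    · intro h; exact ⟨by omega, h⟩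
  have lhs_eq : (∑' k : ℕ, u ^ k *
        ((Nat.card {σ : Equiv.Perm (Fin n) // ∀ i : Fin m,
            (Finset.univ.filter (fun t : Fin n => t.val < k ∧ c (σ t) = i)).card ≤ r - 1} : ℝ)
          / (Nat.factorial n : ℝ)))
      = ∑ p ∈ P, (∏ i, ((x i).choose (p i) : ℝ)) * u ^ (∑ i, p i) *
          (((∑ i, p i).factorial : ℝ) * ((n - ∑ i, p i).factorial : ℝ)
            / (n.factorial : ℝ)) := by
    rw [tsum_eq_sum (s := Finset.range n) ?_]
    · calc ∑ k ∈ Finset.range n, u ^ k *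
            ((Nat.card {σ : Equiv.Perm (Fin n) // ∀ i : Fin m,
              (Finset.univ.filter (fun t : Fin n => t.val < k ∧ c (σ t) = i)).card ≤ r - 1} : ℝ)
              / (Nat.factorial n : ℝ))
          = ∑ k ∈ Finset.range n, ∑ p ∈ P.filter (fun p => ∑ i, p i = k),
              (∏ i, ((x i).choose (p i) : ℝ)) * u ^ k *
                ((k.factorial : ℝ) * ((n - k).factorial : ℝ) / (n.factorial : ℝ)) := by
            apply Finset.sum_congr rfl
            intro k hk
            rw [card_perm_cond c r k (le_of_lt (Finset.mem_range.1 hk)),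
              card_sets_eq_sum (by omega) c x hx]
            push_cast
            rw [Finset.sum_mul, Finset.sum_div, Finset.mul_sum]
            exact Finset.sum_congr rfl (fun p _ => by ring)
        _ = ∑ k ∈ Finset.range n, ∑ p ∈ P₁.filter (fun p => ∑ i, p i = k),
              (∏ i, ((x i).choose (p i) : ℝ)) * u ^ (∑ i, p i) *
                (((∑ i, p i).factorial : ℝ) * ((n - ∑ i, p i).factorial : ℝ)
                  / (n.factorial : ℝ)) := by
            apply Finset.sum_congr rfl
            intro k hk
            rw [hTk k (Finset.mem_range.1 hk)]
            apply Finset.sum_congr rfl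
            intro p hp
            rw [(Finset.mem_filter.1 hp).2]
        _ = ∑ p ∈ P₁, (∏ i, ((x i).choose (p i) : ℝ)) * u ^ (∑ i, p i) *
                (((∑ i, p i).factorial : ℝ) * ((n - ∑ i, p i).factorial : ℝ)
                  / (n.factorial : ℝ)) := by
            exact Finset.sum_fiberwise_of_maps_to
              (fun p hp => Finset.mem_range.2 (Finset.mem_filter.1 hp).2) _
        _ = ∑ p ∈ P, (∏ i, ((x i).choose (p i) : ℝ)) * u ^ (∑ i, p i) *
                (((∑ i, p i).factorial : ℝ) * ((n - ∑ i, p i).factorial : ℝ)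
                  / (n.factorial : ℝ)) := by
            apply Finset.sum_subset (Finset.filter_subset _ _)
            intro p hp hnp
            have hc : (∏ i, ((x i).choose (p i) : ℝ)) = 0 := by
              by_contra hne
              exact hnp (Finset.mem_filter.2 ⟨hp, hKle p hp hne⟩)
            rw [hc]; ring
    · intro k hk
      rw [hzero k (by simpa using Finset.mem_range.not.1 hk)]
      simp
  rw [lhs_eq, hcongr, hswap, Finset.mul_sum]
  apply Finset.sum_congr rfl
  intro p hp
  by_cases hc : (∏ i, ((x i).choose (p i) : ℝ)) = 0
  · rw [hc]; ring
  · have hK : ∑ i, p i < n := hKle p hp hc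
    have he : (∑ i, p i) + (n - ∑ i, p i) + 1 = n + 1 := by omega
    rw [he, Nat.factorial_succ]
    have hnf : (n.factorial : ℝ) ≠ 0 := Nat.cast_ne_zero.2 n.factorial_ne_zero
    push_cast
    field_simp
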